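/- Let $p : \mathbb{R} \to \mathbb{R}$ be a polynomial of degree at most $N$, and let $S \subset \mathbb{R}$ be a measurable set. Then $\int_S |p'(u)|\, du \le 2(N+1) \sup_{u \in S} |p(u)|$, provided the supremum is finite. -/
import Mathlib

open MeasureTheory

lemma lem_sign (f : ℝ → ℝ) (hf : Continuous f) (a b : ℝ)
    (h : ∀ x ∈ Set.Ioo a b, f x ≠ 0) :
    (∀ x ∈ Set.Ioo a b, 0 ≤ f x) ∨ (∀ x ∈ Set.Ioo a b, f x ≤ 0) := by
  by_contra hc
  push_neg at hc
  obtain ⟨⟨x, hx, hfx⟩, ⟨y, hy, hfy⟩⟩ := hc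
  rcases le_total x y with hxy | hxy
  · obtain ⟨z, hz, hz0⟩ := intermediate_value_Icc hxy hf.continuousOn
      (Set.mem_Icc.mpr ⟨hfx.le, hfy.le⟩)
    exact h z ⟨lt_of_lt_of_le hx.1 hz.1, lt_of_le_of_lt hz.2 hy.2⟩ hz0
  · obtain ⟨z, hz, hz0⟩ := intermediate_value_Icc' hxy hf.continuousOn
      (Set.mem_Icc.mpr ⟨hfx.le, hfy.le⟩)
    exact h z ⟨lt_of_lt_of_le hy.1 hz.1, lt_of_le_of_lt hz.2 hx.2⟩ hz0

lemma lem_key (p : Polynomial ℝ) (S : Set ℝ) (hS : MeasurableSet S) (A B : ℝ)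
    (hSAB : S ⊆ Set.Icc A B) (M : ℝ) (hM0 : 0 ≤ M) (hM : ∀ u ∈ S, |p.eval u| ≤ M)
    (hne : ∀ x ∈ Set.Ioo (sInf S) (sSup S), (Polynomial.derivative p).eval x ≠ 0) :
    ∫ u in S, |(Polynomial.derivative p).eval u| ≤ 2 * M := by
  rcases S.eq_empty_or_nonempty with rfl | hSne
  · simp; positivity
  set q := Polynomial.derivative p with hqdef
  have hqc : Continuous fun x => q.eval x := q.continuous
  have hbb : BddBelow S := ⟨A, fun x hx => (hSAB hx).1⟩
  have hba : BddAbove S := ⟨B, fun x hx => (hSAB hx).2⟩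
  set a := sInf S
  set b := sSup S
  have hab : a ≤ b := Real.sInf_le_sSup S hbb hba
  have hSab : S ⊆ Set.Icc a b := fun x hx => ⟨csInf_le hbb hx, le_csSup hba hx⟩
  have hclM : ∀ u ∈ closure S, |p.eval u| ≤ M := by
    have hcl : IsClosed {x : ℝ | |p.eval x| ≤ M} :=
      isClosed_le (p.continuous.abs) continuous_const
    exact fun u hu => closure_minimal hM hcl hu
  have hpa : |p.eval a| ≤ M := hclM a (csInf_mem_closure hSne hbb)
  have hpb : |p.eval b| ≤ M := hclM b (csSup_mem_closure hSne hba)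
  have step1 : ∫ u in S, |q.eval u| ≤ ∫ u in Set.Icc a b, |q.eval u| := by
    refine setIntegral_mono_set (hqc.abs.integrableOn_Icc)
      (Filter.Eventually.of_forall fun x => abs_nonneg _)
      (HasSubset.Subset.eventuallyLE hSab)
  have step2 : ∫ u in Set.Icc a b, |q.eval u| = ∫ u in Set.Ioo a b, |q.eval u| :=
    integral_Icc_eq_integral_Ioo
  have hftc : ∫ u in Set.Ioo a b, q.eval u = p.eval b - p.eval a := by
    rw [← integral_Ioc_eq_integral_Ioo, ← intervalIntegral.integral_of_le hab]
    exact intervalIntegral.integral_eq_sub_of_hasDerivAt (fun x _ => p.hasDerivAt x)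
      (hqc.intervalIntegrable a b)
  have step3 : ∫ u in Set.Ioo a b, |q.eval u| ≤ |p.eval b - p.eval a| := by
    rcases lem_sign (fun x => q.eval x) hqc a b hne with hpos | hneg
    · have : ∫ u in Set.Ioo a b, |q.eval u| = ∫ u in Set.Ioo a b, q.eval u :=
        setIntegral_congr_fun measurableSet_Ioo fun x hx => abs_of_nonneg (hpos x hx)
      rw [this, hftc]; exact le_abs_self _
    · have : ∫ u in Set.Ioo a b, |q.eval u| = ∫ u in Set.Ioo a b, -q.eval u :=
        setIntegral_congr_fun measurableSet_Ioo fun x hx => abs_of_nonpos (hneg x hx)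
      rw [this, integral_neg, hftc]
      exact neg_le_abs _
  calc ∫ u in S, |q.eval u| ≤ |p.eval b - p.eval a| := by
        rw [step2] at step1; exact step1.trans step3
    _ ≤ |p.eval b| + |p.eval a| := abs_sub _ _
    _ ≤ 2 * M := by linarith

lemma lem_rec (p : Polynomial ℝ) (hq0 : Polynomial.derivative p ≠ 0) (M : ℝ) (hM0 : 0 ≤ M) :
    ∀ (n : ℕ) (A c : ℝ) (S : Set ℝ), MeasurableSet S → S ⊆ Set.Icc A c →
      (∀ u ∈ S, |p.eval u| ≤ M) →
      (((Polynomial.derivative p).roots.toFinset.filter (fun r => r < c)).card ≤ n) →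
      ∫ u in S, |(Polynomial.derivative p).eval u| ≤ 2 * (n + 1) * M := by
  intro n
  induction n with
  | zero =>
    intro A c S hS hSA hMS hcard
    have hFe : ((Polynomial.derivative p).roots.toFinset.filter (fun r => r < c)) = ∅ :=
      Finset.card_eq_zero.mp (Nat.le_zero.mp hcard)
    have h := lem_key p S hS A c hSA M hM0 hMS ?_
    · calc ∫ u in S, |(Polynomial.derivative p).eval u| ≤ 2 * M := h
        _ ≤ 2 * ((0 : ℕ) + 1) * M := by norm_num
    · intro x hx hx0
      rcases S.eq_empty_or_nonempty with rfl | hSne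
      · rw [Real.sInf_empty, Real.sSup_empty] at hx
        exact absurd hx (by simp)
      · have hxc : x < c := lt_of_lt_of_le hx.2
          (csSup_le hSne fun y hy => (hSA hy).2)
        have : x ∈ ((Polynomial.derivative p).roots.toFinset.filter (fun r => r < c)) := by
          rw [Finset.mem_filter, Multiset.mem_toFinset, Polynomial.mem_roots hq0]
          exact ⟨hx0, hxc⟩
        simp [hFe] at this
  | succ n IH =>
    intro A c S hS hSA hMS hcard
    set q := Polynomial.derivative p with hqdef
    set F := (q.roots.toFinset.filter (fun r => r < c)) with hF
    rcases F.eq_empty_or_nonempty with hFe | hFne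
    · have h := lem_key p S hS A c hSA M hM0 hMS ?_
      · calc ∫ u in S, |q.eval u| ≤ 2 * M := h
          _ ≤ 2 * ((n + 1 : ℕ) + 1) * M := by
            have : (2 : ℝ) ≤ 2 * ((n + 1 : ℕ) + 1) := by push_cast; nlinarith [Nat.cast_nonneg (α := ℝ) n]
            nlinarith
      · intro x hx hx0
        rcases S.eq_empty_or_nonempty with rfl | hSne
        · rw [Real.sInf_empty, Real.sSup_empty] at hx
          exact absurd hx (by simp)
        · have hxc : x < c := lt_of_lt_of_le hx.2 (csSup_le hSne fun y hy => (hSA hy).2)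
          have : x ∈ F := by
            rw [hF, Finset.mem_filter, Multiset.mem_toFinset, Polynomial.mem_roots hq0]
            exact ⟨hx0, hxc⟩
          simp [hFe] at this
    · set t := F.max' hFne with ht
      have htF : t ∈ F := F.max'_mem hFne
      have htc : t < c := (Finset.mem_filter.mp htF).2
      set S₁ := S ∩ Set.Iic t with hS₁
      set S₂ := S ∩ Set.Ioi t with hS₂
      have hS1m : MeasurableSet S₁ := hS.inter measurableSet_Iic
      have hS2m : MeasurableSet S₂ := hS.inter measurableSet_Ioi
      have hunion : S₁ ∪ S₂ = S := by
        rw [hS₁, hS₂, ← Set.inter_union_distrib_left, Set.Iic_union_Ioi, Set.inter_univ]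
      have hdisj : Disjoint S₁ S₂ :=
        (Set.Iic_disjoint_Ioi le_rfl).mono Set.inter_subset_right Set.inter_subset_right
      have hqc : Continuous fun x => q.eval x := q.continuous
      have hintIcc : IntegrableOn (fun u => |q.eval u|) (Set.Icc A c) volume :=
        hqc.abs.integrableOn_Icc
      have hint1 : IntegrableOn (fun u => |q.eval u|) S₁ volume :=
        hintIcc.mono_set (Set.inter_subset_left.trans hSA)
      have hint2 : IntegrableOn (fun u => |q.eval u|) S₂ volume :=
        hintIcc.mono_set (Set.inter_subset_left.trans hSA)
      have hsplit : ∫ u in S, |q.eval u| = (∫ u in S₁, |q.eval u|) + ∫ u in S₂, |q.eval u| := by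
        rw [← hunion, setIntegral_union hdisj hS2m hint1 hint2]
      have h1 : ∫ u in S₁, |q.eval u| ≤ 2 * (n + 1) * M := by
        apply IH A t S₁ hS1m (fun x hx => ⟨(hSA hx.1).1, hx.2⟩) (fun u hu => hMS u hu.1)
        have hsub : q.roots.toFinset.filter (fun r => r < t) ⊆ F.erase t := by
          intro x hx
          rw [Finset.mem_filter] at hx
          refine Finset.mem_erase.mpr ⟨ne_of_lt hx.2, ?_⟩
          rw [hF, Finset.mem_filter]
          exact ⟨hx.1, hx.2.trans htc⟩
        have := Finset.card_le_card hsub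
        rw [Finset.card_erase_of_mem htF] at this
        omega
      have h2 : ∫ u in S₂, |q.eval u| ≤ 2 * M := by
        apply lem_key p S₂ hS2m t c (fun x hx => ⟨le_of_lt hx.2, (hSA hx.1).2⟩) M hM0
          (fun u hu => hMS u hu.1)
        intro x hx hx0
        rcases S₂.eq_empty_or_nonempty with hE | hSne
        · rw [hE, Real.sInf_empty, Real.sSup_empty] at hx
          exact absurd hx (by simp)
        · have hxt : t < x := lt_of_le_of_lt
            (le_csInf hSne fun y hy => le_of_lt hy.2) hx.1
          have hxc : x < c := lt_of_lt_of_le hx.2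
            (csSup_le hSne fun y hy => (hSA hy.1).2)
          have hxF : x ∈ F := by
            rw [hF, Finset.mem_filter, Multiset.mem_toFinset, Polynomial.mem_roots hq0]
            exact ⟨hx0, hxc⟩
          exact absurd (F.le_max' x hxF) (not_le.mpr hxt)
      rw [hsplit]
      push_cast
      linarith

/-- the integral of `|p'|` over a set is controlled by the sup of `|p|`. -/
theorem stmt1 (N : ℕ) (p : Polynomial ℝ) (hp : p.natDegree ≤ N)
    (S : Set ℝ) (hS : MeasurableSet S) (M : ℝ) (hM0 : 0 ≤ M)
    (hM : ∀ u ∈ S, |p.eval u| ≤ M) :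
    ∫ u in S, |(Polynomial.derivative p).eval u| ≤ 2 * (N + 1) * M := by
  by_cases hq0 : Polynomial.derivative p = 0
  · rw [hq0]
    simp
    positivity
  rcases S.eq_empty_or_nonempty with rfl | hSne
  · simp; positivity
  have hdeg : 0 < p.degree := by
    by_contra h
    push_neg at h
    apply hq0
    rw [Polynomial.eq_C_of_degree_le_zero h]
    simp
  have h1 := Polynomial.abs_tendsto_atTop p hdeg
  obtain ⟨Aup, hAup⟩ := Filter.eventually_atTop.mp (h1.eventually_gt_atTop M)
  set pc := p.comp (-Polynomial.X) with hpc
  have hdegc : 0 < pc.degree := by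
    rw [← Polynomial.natDegree_pos_iff_degree_pos] at hdeg ⊢
    rw [hpc, Polynomial.natDegree_comp]
    simpa using hdeg
  have h2 := Polynomial.abs_tendsto_atTop pc hdegc
  obtain ⟨Alo, hAlo⟩ := Filter.eventually_atTop.mp (h2.eventually_gt_atTop M)
  have hpceval : ∀ x : ℝ, pc.eval x = p.eval (-x) := by
    intro x; rw [hpc, Polynomial.eval_comp]; simp
  have hSsub : S ⊆ Set.Icc (-Alo) Aup := by
    intro u hu
    constructor
    · by_contra h
      push_neg at h
      have : Alo ≤ -u := by linarith
      have := hAlo (-u) this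
      rw [hpceval, neg_neg] at this
      exact absurd (hM u hu) (not_le.mpr this)
    · by_contra h
      push_neg at h
      exact absurd (hM u hu) (not_le.mpr (hAup u h.le))
  have hcard : (((Polynomial.derivative p).roots.toFinset.filter (fun r => r < Aup)).card ≤ N) := by
    calc ((Polynomial.derivative p).roots.toFinset.filter (fun r => r < Aup)).card
        ≤ (Polynomial.derivative p).roots.toFinset.card := Finset.card_filter_le _ _
      _ ≤ Multiset.card (Polynomial.derivative p).roots := (Polynomial.derivative p).roots.toFinset_card_le
      _ ≤ (Polynomial.derivative p).natDegree := Polynomial.card_roots' _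
      _ ≤ p.natDegree - 1 := Polynomial.natDegree_derivative_le p
      _ ≤ N := le_trans (Nat.sub_le _ _) hp
  exact lem_rec p hq0 M hM0 N (-Alo) Aup S hS hSsub hM hcard
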